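/- For any real θ and the fermionic swap operator f_swap on distinct modes p ≠ q, conjugation of a_p† by the unitary e^{i f_swap θ} gives e^{i f_swap θ} a_p† e^{−i f_swap θ} = (1/2)(e^{−2iθ}(a_p† − a_q†) + (a_p† + a_q†)), and symmetrically for a_q†. -/

import Mathlib

open Complex


lemma tsum_exp_aux (z : ℂ) :
    (∑' n : ℕ, ((n.factorial : ℂ))⁻¹ • z ^ n) = Complex.exp z := by
  rw [Complex.exp_eq_exp_ℂ, NormedSpace.exp_eq_tsum ℂ]

lemma exp_smul_mul_of_anticomm
    {A : Type*} [NormedRing A] [NormedAlgebra ℂ A] [CompleteSpace A]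
    (f X : A) (h : f * X = -X) (z : ℂ) :
    NormedSpace.exp (z • f) * X = Complex.exp (-z) • X := by
  have hn : ∀ n : ℕ, f ^ n * X = ((-1 : ℂ) ^ n) • X := by
    intro n
    induction n with
    | zero => simp
    | succ n ih =>
      rw [pow_succ, mul_assoc, h, mul_neg, ih, pow_succ, mul_neg_one, neg_smul]
  rw [NormedSpace.exp_eq_tsum ℂ, ← (NormedSpace.expSeries_summable' (𝕂 := ℂ) (z • f)).tsum_mul_right X]
  have hterm : ∀ n : ℕ, (((n.factorial : ℂ))⁻¹ • (z • f) ^ n) * X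
      = (((n.factorial : ℂ))⁻¹ • (-z) ^ n) • X := by
    intro n
    rw [smul_pow, smul_mul_assoc, smul_mul_assoc, hn, smul_smul, smul_smul, smul_eq_mul]
    congr 1
    rw [neg_pow]
    ring
  simp_rw [hterm]
  rw [(NormedSpace.expSeries_summable' (𝕂 := ℂ) (-z)).tsum_smul_const, tsum_exp_aux]

lemma mul_exp_smul_of_fix
    {A : Type*} [NormedRing A] [NormedAlgebra ℂ A] [CompleteSpace A]
    (f X : A) (h : X * f = X) (z : ℂ) :
    X * NormedSpace.exp (z • f) = Complex.exp z • X := by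
  have hn : ∀ n : ℕ, X * f ^ n = X := by
    intro n
    induction n with
    | zero => simp
    | succ n ih => rw [pow_succ, ← mul_assoc, ih, h]
  rw [NormedSpace.exp_eq_tsum ℂ, ← (NormedSpace.expSeries_summable' (𝕂 := ℂ) (z • f)).tsum_mul_left X]
  have hterm : ∀ n : ℕ, X * (((n.factorial : ℂ))⁻¹ • (z • f) ^ n)
      = (((n.factorial : ℂ))⁻¹ • z ^ n) • X := by
    intro n
    rw [smul_pow, mul_smul_comm, mul_smul_comm, hn, smul_smul, smul_eq_mul]
  simp_rw [hterm]
  rw [(NormedSpace.expSeries_summable' (𝕂 := ℂ) z).tsum_smul_const, tsum_exp_aux]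

lemma exp_conj_of_commute
    {A : Type*} [NormedRing A] [NormedAlgebra ℂ A] [CompleteSpace A]
    (f Y : A) (h : f * Y = Y * f) (z : ℂ) :
    NormedSpace.exp (z • f) * Y * NormedSpace.exp ((-z) • f) = Y := by
  have hc : Commute (z • f) Y := by
    unfold Commute SemiconjBy
    rw [smul_mul_assoc, mul_smul_comm, h]
  letI : NormedAlgebra ℚ A := NormedAlgebra.restrictScalars ℚ ℂ A
  rw [(hc.exp_left).eq, mul_assoc, ← NormedSpace.exp_add_of_commute]
  · simp [← add_smul]
  · exact ((Commute.refl f).smul_left z).smul_right (-z)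

/-- For any real `θ` and the fermionic swap operator `f_swap` on two distinct modes,
`e^{i f_swap θ} a_p† e^{−i f_swap θ} = (1/2)(e^{−2iθ}(a_p† − a_q†) + (a_p† + a_q†))`,
and symmetrically for `a_q†`. -/
theorem fswap_exponential_conjugation
    (A : Type*) [NormedRing A] [NormedAlgebra ℂ A] [CompleteSpace A]
    (ap aq apd aqd : A)
    (hpp : ap * apd + apd * ap = 1)
    (hqq : aq * aqd + aqd * aq = 1)
    (hpq : ap * aqd + aqd * ap = 0)
    (hqp : aq * apd + apd * aq = 0)
    (haa : ap * aq + aq * ap = 0)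
    (hdd : apd * aqd + aqd * apd = 0)
    (hp2 : ap * ap = 0) (hq2 : aq * aq = 0)
    (hpd2 : apd * apd = 0) (hqd2 : aqd * aqd = 0)
    (θ : ℝ)
    (fswap : A)
    (hfswap : fswap = 1 + apd * aq + aqd * ap - apd * ap - aqd * aq) :
    NormedSpace.exp ((Complex.I * (θ : ℂ)) • fswap) * apd
        * NormedSpace.exp ((-(Complex.I * (θ : ℂ))) • fswap)
      = (2 : ℂ)⁻¹ • (Complex.exp (-(2 * Complex.I * (θ : ℂ))) • (apd - aqd) + (apd + aqd))
    ∧ NormedSpace.exp ((Complex.I * (θ : ℂ)) • fswap) * aqd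
        * NormedSpace.exp ((-(Complex.I * (θ : ℂ))) • fswap)
      = (2 : ℂ)⁻¹ • (Complex.exp (-(2 * Complex.I * (θ : ℂ))) • (aqd - apd) + (apd + aqd)) := by
  -- auxiliary anticommutation rewrites
  have h1 : ap * apd = 1 - apd * ap := by rw [← hpp]; abel
  have h2 : aq * aqd = 1 - aqd * aq := by rw [← hqq]; abel
  have h3 : ap * aqd = -(aqd * ap) := by
    have := hpq; rw [add_eq_zero_iff_eq_neg] at this; exact this
  have h4 : aq * apd = -(apd * aq) := by
    have := hqp; rw [add_eq_zero_iff_eq_neg] at this; exact this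
  have h5 : apd * aqd = -(aqd * apd) := by
    have := hdd; rw [add_eq_zero_iff_eq_neg] at this; exact this
  set d := apd - aqd with hd
  set s := apd + aqd with hs
  have hA : fswap * d = -d := by
    rw [hfswap, hd]
    simp only [mul_sub, sub_mul, add_mul, mul_add, one_mul, mul_one, mul_assoc, h1, h2, h3, h4,
      mul_neg, neg_mul, mul_sub, sub_mul, mul_add, add_mul, neg_neg, mul_zero, zero_mul,
      hp2, hq2, hpd2, hqd2, sub_zero, neg_zero]
    simp only [← mul_assoc, hpd2, hqd2, hp2, hq2, h5, zero_mul, mul_zero, neg_mul, neg_neg]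
    abel
  have hB : d * fswap = d := by
    rw [hfswap, hd]
    simp only [mul_sub, sub_mul, add_mul, mul_add, one_mul, mul_one, mul_assoc, h1, h2, h3, h4,
      mul_neg, neg_mul, mul_sub, sub_mul, mul_add, add_mul, neg_neg, mul_zero, zero_mul,
      hp2, hq2, hpd2, hqd2, sub_zero, neg_zero]
    simp only [← mul_assoc, hpd2, hqd2, hp2, hq2, h5, zero_mul, mul_zero, neg_mul, neg_neg]
    abel
  have hC : fswap * s = s * fswap := by
    rw [hfswap, hs]
    simp only [mul_sub, sub_mul, add_mul, mul_add, one_mul, mul_one, mul_assoc, h1, h2, h3, h4,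
      mul_neg, neg_mul, mul_sub, sub_mul, mul_add, add_mul, neg_neg, mul_zero, zero_mul,
      hp2, hq2, hpd2, hqd2, sub_zero, neg_zero]
    simp only [← mul_assoc, hpd2, hqd2, hp2, hq2, h5, zero_mul, mul_zero, neg_mul, neg_neg]
    abel
  set z : ℂ := Complex.I * (θ : ℂ) with hz
  set U := NormedSpace.exp (z • fswap) with hU
  set V := NormedSpace.exp ((-z) • fswap) with hV
  have key : ∀ x : A, fswap * x = -x → x * fswap = x →
      U * x * V = Complex.exp (-(2 * z)) • x := by
    intro x k1 k2
    rw [hU, hV, exp_smul_mul_of_anticomm fswap x k1 z, smul_mul_assoc,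
      mul_exp_smul_of_fix fswap x k2 (-z), smul_smul, ← Complex.exp_add]
    congr 1
    ring
  have keyd : U * d * V = Complex.exp (-(2 * z)) • d := key d hA hB
  have keynd : U * (-d) * V = Complex.exp (-(2 * z)) • (-d) := by
    refine key (-d) ?_ ?_
    · rw [mul_neg, hA, neg_neg]
    · rw [neg_mul, hB]
  have keys : U * s * V = s := exp_conj_of_commute fswap s hC z
  have conj_lin : ∀ x y : A, U * ((2:ℂ)⁻¹ • (x + y)) * V
      = (2:ℂ)⁻¹ • (U * x * V + U * y * V) := by
    intro x y
    rw [mul_smul_comm, smul_mul_assoc, mul_add, add_mul]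
  have hexp2 : Complex.exp (-(2 * z)) = Complex.exp (-(2 * Complex.I * (θ:ℂ))) := by
    congr 1; rw [hz]; ring
  constructor
  · have hapd : apd = (2:ℂ)⁻¹ • (d + s) := by
      rw [hd, hs]
      have : (apd - aqd) + (apd + aqd) = (2:ℂ) • apd := by
        rw [two_smul]; abel
      rw [this, smul_smul, inv_mul_cancel₀ (two_ne_zero), one_smul]
    calc U * apd * V = U * ((2:ℂ)⁻¹ • (d + s)) * V := by rw [← hapd]
      _ = (2:ℂ)⁻¹ • (U * d * V + U * s * V) := conj_lin d s
      _ = (2:ℂ)⁻¹ • (Complex.exp (-(2 * Complex.I * (θ:ℂ))) • d + s) := by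
          rw [keyd, keys, hexp2]
  · have haqd : aqd = (2:ℂ)⁻¹ • ((-d) + s) := by
      rw [hd, hs]
      have : (-(apd - aqd)) + (apd + aqd) = (2:ℂ) • aqd := by
        rw [two_smul]; abel
      rw [this, smul_smul, inv_mul_cancel₀ (two_ne_zero), one_smul]
    have hnd : -d = aqd - apd := by rw [hd]; abel
    calc U * aqd * V = U * ((2:ℂ)⁻¹ • ((-d) + s)) * V := by rw [← haqd]
      _ = (2:ℂ)⁻¹ • (U * (-d) * V + U * s * V) := conj_lin (-d) s
      _ = (2:ℂ)⁻¹ • (Complex.exp (-(2 * Complex.I * (θ:ℂ))) • (aqd - apd) + (apd + aqd)) := by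
          rw [keynd, keys, hexp2, hnd, hs]
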